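/- Pathwise observability threshold (Babaali–Egerstedt): for all positive integers s and n there exists a finite N = N(s,n) such that for every autonomous switched linear system with s modes given by matrices A_1,…,A_s ∈ ℝ^{n×n} and C_1,…,C_s ∈ ℝ^{1×n}, the following holds: if a mode sequence σ_0,…,σ_{N−1} ∈ {1,…,s} satisfies rank(O(σ_{0:N−1})) < n, then for every length L ∈ ℕ there exists a mode sequence σ̂ of length L such that the row space of O(σ̂) is contained in the row space of O(σ_{0:N−1}), i.e. Range(O(σ̂)^T) ⊆ Range(O(σ_{0:N−1})^T); in particular Null(O(σ_{0:N−1})) ⊆ Null(O(σ̂)). -/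

import Mathlib

open Matrix

/-- The state-transition matrix `A_{σ_{k-1}} ⋯ A_{σ_0}` of the autonomous
switched linear system `x_{k+1} = A_{σ_k} x_k` (equal to `1` for `k = 0`). -/
def switchedTrans {n s : ℕ} (A : Fin s → Matrix (Fin n) (Fin n) ℝ)
    (σ : ℕ → Fin s) : ℕ → Matrix (Fin n) (Fin n) ℝ
  | 0 => 1
  | k + 1 => A (σ k) * switchedTrans A σ k

/-- The observability matrix along the mode sequence `σ_0, …, σ_{L-1}` of the
switched linear system with state matrices `A i` and scalar-output rows `C i`:
its `k`-th row is `C_{σ_k} A_{σ_{k-1}} ⋯ A_{σ_0}`. -/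
def switchedObs {n s : ℕ} (A : Fin s → Matrix (Fin n) (Fin n) ℝ)
    (C : Fin s → Fin n → ℝ) (σ : ℕ → Fin s) (L : ℕ) :
    Matrix (Fin L) (Fin n) ℝ :=
  Matrix.of fun k => Matrix.vecMul (C (σ (k : ℕ))) (switchedTrans A σ (k : ℕ))

/-! ### Auxiliary material -/

/-- Generic (any commutative ring) version of `switchedTrans`. -/
def genTrans {n s : ℕ} {R : Type*} [CommRing R]
    (A : Fin s → Matrix (Fin n) (Fin n) R) (σ : ℕ → Fin s) :
    ℕ → Matrix (Fin n) (Fin n) R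
  | 0 => 1
  | k + 1 => A (σ k) * genTrans A σ k

lemma genTrans_eq_switchedTrans {n s : ℕ} (A : Fin s → Matrix (Fin n) (Fin n) ℝ)
    (σ : ℕ → Fin s) (k : ℕ) : genTrans A σ k = switchedTrans A σ k := by
  induction k with
  | zero => rfl
  | succ k ih => simp [genTrans, switchedTrans, ih]

lemma genTrans_congr {n s : ℕ} {R : Type*} [CommRing R]
    (A : Fin s → Matrix (Fin n) (Fin n) R) {σ σ' : ℕ → Fin s} (k : ℕ)
    (h : ∀ j < k, σ j = σ' j) : genTrans A σ k = genTrans A σ' k := by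
  induction k with
  | zero => rfl
  | succ k ih =>
    have h1 : σ k = σ' k := h k (Nat.lt_succ_self k)
    have h2 : genTrans A σ k = genTrans A σ' k :=
      ih fun j hj => h j (hj.trans (Nat.lt_succ_self k))
    simp [genTrans, h1, h2]

lemma genTrans_map {n s : ℕ} {R S : Type*} [CommRing R] [CommRing S]
    (f : R →+* S) (A : Fin s → Matrix (Fin n) (Fin n) R) (σ : ℕ → Fin s) (k : ℕ) :
    (genTrans A σ k).map f = genTrans (fun a => (A a).map f) σ k := by
  induction k with
  | zero =>
    show (1 : Matrix (Fin n) (Fin n) R).map f = 1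
    exact Matrix.map_one f f.map_zero f.map_one
  | succ k ih =>
    have := (RingHom.mapMatrix f : Matrix (Fin n) (Fin n) R →+* Matrix (Fin n) (Fin n) S).map_mul (A (σ k)) (genTrans A σ k)
    simp only [RingHom.mapMatrix_apply] at this
    simp [genTrans, this, ih]

namespace SwitchedObsAux

variable (s n : ℕ)

/-- Index type for the polynomial variables: entries of the `A` matrices,
entries of the `C` rows, and entries of `n` generator vectors. -/
abbrev Idx := (Fin s × Fin n × Fin n) ⊕ ((Fin s × Fin n) ⊕ (Fin n × Fin n))

variable {s n}

/-- Decode the `A` part of a point. -/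
def decA (p : Idx s n → ℝ) : Fin s → Matrix (Fin n) (Fin n) ℝ :=
  fun a => Matrix.of fun i j => p (Sum.inl (a, i, j))

/-- Decode the `C` part of a point. -/
def decC (p : Idx s n → ℝ) : Fin s → Fin n → ℝ :=
  fun a i => p (Sum.inr (Sum.inl (a, i)))

/-- Decode the generator-vectors part of a point. -/
def decV (p : Idx s n → ℝ) : Fin n → Fin n → ℝ :=
  fun i j => p (Sum.inr (Sum.inr (i, j)))

/-- The generic `A` matrices with polynomial entries. -/
noncomputable def pA : Fin s → Matrix (Fin n) (Fin n) (MvPolynomial (Idx s n) ℝ) :=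
  fun a => Matrix.of fun i j => MvPolynomial.X (Sum.inl (a, i, j))

noncomputable def pC : Fin s → Fin n → MvPolynomial (Idx s n) ℝ :=
  fun a i => MvPolynomial.X (Sum.inr (Sum.inl (a, i)))

noncomputable def pV : Fin n → Fin n → MvPolynomial (Idx s n) ℝ :=
  fun i j => MvPolynomial.X (Sum.inr (Sum.inr (i, j)))

/-- The polynomial expressing that the `k`-th output along the word `u`
annihilates the `i`-th generator vector. -/
noncomputable def obsPoly (u : ℕ → Fin s) (i : Fin n) (k : ℕ) :
    MvPolynomial (Idx s n) ℝ :=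
  dotProduct (Matrix.vecMul (pC (u k)) (genTrans pA u k)) (pV i)

lemma eval_obsPoly (p : Idx s n → ℝ) (u : ℕ → Fin s) (i : Fin n) (k : ℕ) :
    MvPolynomial.eval p (obsPoly u i k) =
      dotProduct
        (Matrix.vecMul (decC p (u k)) (switchedTrans (decA p) u k)) (decV p i) := by
  classical
  set f := (MvPolynomial.eval p : MvPolynomial (Idx s n) ℝ →+* ℝ)
  have hA : ∀ a : Fin s, (pA (s := s) (n := n) a).map f = decA p a := by
    intro a; ext i j; simp [pA, decA, f, Matrix.map_apply]
  have htrans : (genTrans (pA (s := s) (n := n)) u k).map f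
      = switchedTrans (decA p) u k := by
    rw [genTrans_map, ← genTrans_eq_switchedTrans]
    have : (fun a => (pA (s := s) (n := n) a).map f) = decA p := funext hA
    rw [this]
  have hvecmul : ∀ j, f ((Matrix.vecMul (pC (u k)) (genTrans pA u k)) j)
      = (Matrix.vecMul (decC p (u k)) (switchedTrans (decA p) u k)) j := by
    intro j
    rw [RingHom.map_vecMul, htrans]
    congr 1
    funext l
    simp [pC, decC, f]
  rw [obsPoly, RingHom.map_dotProduct]
  congr 1
  · funext j; exact hvecmul j
  · funext j; simp [pV, decV, f]

/-- The set of points (systems plus generator vectors) for which there is a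
word of length `m` along which all generator vectors are invisible. -/
def XSet (s n m : ℕ) : Set (Idx s n → ℝ) :=
  {p | ∃ u : ℕ → Fin s, ∀ i : Fin n, ∀ k < m,
    dotProduct
      (Matrix.vecMul (decC p (u k)) (switchedTrans (decA p) u k)) (decV p i) = 0}

lemma XSet_antitone {s n : ℕ} : Antitone (XSet s n) := by
  intro m m' h p hp
  obtain ⟨u, hu⟩ := hp
  exact ⟨u, fun i k hk => hu i k (lt_of_lt_of_le hk h)⟩

lemma exists_poly_of_not_mem {s n m : ℕ} (hs : 0 < s) (p : Idx s n → ℝ)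
    (hp : p ∉ XSet s n m) :
    ∃ q ∈ MvPolynomial.vanishingIdeal ℝ (XSet s n m), MvPolynomial.eval p q ≠ 0 := by
  classical
  -- for each word w of length m, a witnessing nonvanishing polynomial
  have key : ∀ w : Fin m → Fin s, ∃ ik : Fin n × ℕ, ik.2 < m ∧
      MvPolynomial.eval p
        (obsPoly (fun j => if h : j < m then w ⟨j, h⟩ else ⟨0, hs⟩) ik.1 ik.2) ≠ 0 := by
    intro w
    set u : ℕ → Fin s := fun j => if h : j < m then w ⟨j, h⟩ else ⟨0, hs⟩ with hu
    by_contra hcon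
    push_neg at hcon
    apply hp
    refine ⟨u, fun i k hk => ?_⟩
    have := hcon (i, k) hk
    rwa [eval_obsPoly] at this
  choose ik hklt hne using key
  set ext : (Fin m → Fin s) → ℕ → Fin s :=
    fun w j => if h : j < m then w ⟨j, h⟩ else ⟨0, hs⟩ with hext
  refine ⟨∏ w : Fin m → Fin s, obsPoly (ext w) (ik w).1 (ik w).2, ?_, ?_⟩
  · rw [MvPolynomial.mem_vanishingIdeal_iff]
    intro x hx
    obtain ⟨u, hu⟩ := hx
    set w : Fin m → Fin s := fun j => u j with hw
    rw [map_prod]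
    refine Finset.prod_eq_zero (Finset.mem_univ w) ?_
    change MvPolynomial.eval x _ = 0
    rw [eval_obsPoly]
    have hagree : ∀ j < (ik w).2 + 1, u j = ext w j := by
      intro j hj
      have hjm : j < m := lt_of_lt_of_le hj (hklt w)
      simp [hext, hjm, hw]
    have htr : switchedTrans (decA x) (ext w) (ik w).2
        = switchedTrans (decA x) u (ik w).2 := by
      rw [← genTrans_eq_switchedTrans, ← genTrans_eq_switchedTrans]
      exact genTrans_congr _ _ fun j hj => (hagree j (hj.trans (Nat.lt_succ_self _))).symm
    have hCeq : ext w (ik w).2 = u (ik w).2 := (hagree _ (Nat.lt_succ_self _)).symm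
    rw [htr, hCeq]
    exact hu (ik w).1 (ik w).2 (hklt w)
  · rw [map_prod]
    exact Finset.prod_ne_zero_iff.2 fun w _ => hne w

/-- The stabilization threshold: the vanishing ideals of the `XSet`s form an
increasing chain in a Noetherian ring, hence stabilize. -/
lemma exists_threshold (s n : ℕ) (hs : 0 < s) :
    ∃ N : ℕ, 0 < N ∧ ∀ m : ℕ, XSet s n N ⊆ XSet s n m := by
  classical
  have hmono : Monotone fun m => MvPolynomial.vanishingIdeal ℝ (XSet s n m) := by
    intro a b hab
    exact MvPolynomial.vanishingIdeal_anti_mono (XSet_antitone hab)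
  obtain ⟨N, hN⟩ := monotone_stabilizes_iff_noetherian.mpr inferInstance
    ⟨fun m => MvPolynomial.vanishingIdeal ℝ (XSet s n m), hmono⟩
  refine ⟨N + 1, Nat.succ_pos N, fun m => ?_⟩
  rcases le_or_gt m (N + 1) with hm | hm
  · exact XSet_antitone hm
  · -- m > N + 1 ≥ N : use stabilization
    intro p hp
    by_contra hpm
    obtain ⟨q, hq, hqne⟩ := exists_poly_of_not_mem hs p hpm
    have h1 : MvPolynomial.vanishingIdeal ℝ (XSet s n m)
        = MvPolynomial.vanishingIdeal ℝ (XSet s n N) := by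
      exact (hN m (le_of_lt (by omega))).symm
    have h2 : MvPolynomial.vanishingIdeal ℝ (XSet s n N)
        ≤ MvPolynomial.vanishingIdeal ℝ (XSet s n (N + 1)) := by
      exact le_of_eq (hN (N + 1) (Nat.le_succ N))
    have hq' : q ∈ MvPolynomial.vanishingIdeal ℝ (XSet s n (N + 1)) := h2 (h1 ▸ hq)
    exact hqne (MvPolynomial.mem_vanishingIdeal_iff.mp hq' p hp)

end SwitchedObsAux

/-- Factorization of linear maps through kernels, over a field. -/
lemma exists_comp_of_ker_le_ker {K V W U : Type*} [Field K]
    [AddCommGroup V] [Module K V] [AddCommGroup W] [Module K W]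
    [AddCommGroup U] [Module K U]
    (f : V →ₗ[K] W) (g : V →ₗ[K] U) (h : LinearMap.ker f ≤ LinearMap.ker g) :
    ∃ h' : W →ₗ[K] U, g = h' ∘ₗ f := by
  classical
  set q : V ⧸ LinearMap.ker f →ₗ[K] U := (LinearMap.ker f).liftQ g h with hq
  set e := f.quotKerEquivRange with he
  set r : LinearMap.range f →ₗ[K] U := q ∘ₗ (e.symm : LinearMap.range f →ₗ[K] _) with hr
  obtain ⟨h', hh'⟩ := r.exists_extend
  refine ⟨h', ?_⟩
  ext x
  have hx : f x ∈ LinearMap.range f := LinearMap.mem_range_self f x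
  have h1 : h' (f x) = r ⟨f x, hx⟩ := by
    have := congrArg (fun φ => φ ⟨f x, hx⟩) hh'
    simpa using this
  have h2 : e (Submodule.Quotient.mk x) = ⟨f x, hx⟩ := by
    apply Subtype.ext
    exact f.quotKerEquivRange_apply_mk x
  have h3 : e.symm ⟨f x, hx⟩ = Submodule.Quotient.mk x := by
    rw [← h2, LinearEquiv.symm_apply_apply]
  simp only [LinearMap.comp_apply]
  rw [h1, hr]
  simp only [LinearMap.comp_apply, LinearEquiv.coe_coe, h3, hq,
    Submodule.liftQ_apply]

/-- Kernel inclusion implies reverse row-space inclusion, over a field. -/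
lemma range_transpose_le_of_ker_le {K : Type*} [Field K] {m₁ m₂ ν : ℕ}
    (M : Matrix (Fin m₁) (Fin ν) K) (M' : Matrix (Fin m₂) (Fin ν) K)
    (h : LinearMap.ker M.mulVecLin ≤ LinearMap.ker M'.mulVecLin) :
    LinearMap.range M'ᵀ.mulVecLin ≤ LinearMap.range Mᵀ.mulVecLin := by
  classical
  obtain ⟨h', hh'⟩ := exists_comp_of_ker_le_ker M.mulVecLin M'.mulVecLin h
  set X := LinearMap.toMatrix' h' with hX
  have hXlin : X.mulVecLin = h' := by
    rw [← Matrix.toLin'_apply']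
    exact Matrix.toLin'_toMatrix' h'
  have hfact : M'.mulVecLin = (X * M).mulVecLin := by
    rw [Matrix.mulVecLin_mul, hXlin, hh']
  have hMeq : M' = X * M := by
    ext i j
    have := congrFun (congrArg (fun φ => φ.toFun (Pi.single j 1)) hfact) i
    simpa [Matrix.mulVecLin_apply, Matrix.mulVec_single, Matrix.mul_apply, Matrix.mulVec, dotProduct, Pi.single_apply] using this
  rw [Matrix.mulVecLin_transpose, Matrix.mulVecLin_transpose]
  rintro y ⟨v, rfl⟩
  refine ⟨Matrix.vecMul v X, ?_⟩
  simp [Matrix.vecMulLinear_apply, hMeq, Matrix.vecMul_vecMul]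

/-- pathwise observability threshold, Babaali–Egerstedt.
For all positive `s` and `n` there is a finite `N = N(s, n)` such that for
every `s`-mode, `n`-dimensional, scalar-output switched linear system and
every mode sequence `σ` whose length-`N` observability matrix has rank `< n`,
for every length `L` there is a mode sequence `σ̂` whose length-`L`
observability matrix has row space contained in that of `O(σ_{0:N-1})`;
in particular `Null(O(σ_{0:N-1})) ⊆ Null(O(σ̂))`. -/
theorem pathwise_observability_threshold (s n : ℕ) (hs : 0 < s) (hn : 0 < n) :
    ∃ N : ℕ, 0 < N ∧
      ∀ (A : Fin s → Matrix (Fin n) (Fin n) ℝ) (C : Fin s → Fin n → ℝ)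
        (σ : ℕ → Fin s),
        (switchedObs A C σ N).rank < n →
        ∀ L : ℕ, ∃ σhat : ℕ → Fin s,
          LinearMap.range (Matrix.mulVecLin (switchedObs A C σhat L)ᵀ) ≤
            LinearMap.range (Matrix.mulVecLin (switchedObs A C σ N)ᵀ) ∧
          LinearMap.ker (Matrix.mulVecLin (switchedObs A C σ N)) ≤
            LinearMap.ker (Matrix.mulVecLin (switchedObs A C σhat L)) := by
  classical
  obtain ⟨N, hNpos, hN⟩ := SwitchedObsAux.exists_threshold s n hs
  refine ⟨N, hNpos, fun A C σ _hrank L => ?_⟩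
  set K := LinearMap.ker (Matrix.mulVecLin (switchedObs A C σ N)) with hK
  -- choose generators of K indexed by Fin n
  have : Module.Finite ℝ K := inferInstance
  set d := Module.finrank ℝ K with hd
  have hdn : d ≤ n := by
    have := Submodule.finrank_le K
    simpa [Module.finrank_fintype_fun_eq_card] using this
  set b := Module.finBasis ℝ K with hb
  set v : Fin n → (Fin n → ℝ) :=
    fun i => if h : (i : ℕ) < d then (b ⟨i, h⟩ : Fin n → ℝ) else 0 with hv
  have hvK : ∀ i, v i ∈ K := by
    intro i
    by_cases h : (i : ℕ) < d
    · simp only [hv, dif_pos h]; exact (b ⟨i, h⟩).2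
    · simp only [hv, dif_neg h]; exact K.zero_mem
  have hKspan : K ≤ Submodule.span ℝ (Set.range v) := by
    intro x hx
    have hxspan : (⟨x, hx⟩ : K) ∈ Submodule.span ℝ (Set.range b) := by
      rw [b.span_eq]; trivial
    have := Submodule.mem_map_of_mem (f := K.subtype) hxspan
    rw [Submodule.map_span] at this
    refine Submodule.span_mono ?_ this
    rintro y ⟨_, ⟨j, rfl⟩, rfl⟩
    refine ⟨⟨(j : ℕ), lt_of_lt_of_le j.2 hdn⟩, ?_⟩
    simp [hv, j.2]
    intro h; exact absurd j.2 (not_lt.mpr h)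
  -- build the point
  set p : SwitchedObsAux.Idx s n → ℝ := fun idx =>
    match idx with
    | Sum.inl (a, i, j) => A a i j
    | Sum.inr (Sum.inl (a, i)) => C a i
    | Sum.inr (Sum.inr (i, j)) => v i j with hp
  have hdecA : SwitchedObsAux.decA p = A := by
    funext a; ext i j; rfl
  have hdecC : SwitchedObsAux.decC p = C := by
    funext a i; rfl
  have hdecV : SwitchedObsAux.decV p = v := by
    funext i j; rfl
  -- each v i is killed by all rows of the length-m observability matrix
  have hrow : ∀ (τ : ℕ → Fin s) (m : ℕ) (x : Fin n → ℝ),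
      (∀ k < m, dotProduct
        (Matrix.vecMul (C (τ k)) (switchedTrans A τ k)) x = 0) ↔
      x ∈ LinearMap.ker (Matrix.mulVecLin (switchedObs A C τ m)) := by
    intro τ m x
    rw [LinearMap.mem_ker]
    constructor
    · intro hzero
      funext k
      exact hzero (k : ℕ) k.2
    · intro hzero k hk
      exact congrFun hzero ⟨k, hk⟩
  have hmem : p ∈ SwitchedObsAux.XSet s n N := by
    refine ⟨σ, fun i k hk => ?_⟩
    rw [hdecA, hdecC, hdecV]
    exact ((hrow σ N (v i)).mpr (hvK i)) k hk
  have hmemL : p ∈ SwitchedObsAux.XSet s n L := hN L hmem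
  obtain ⟨u, hu⟩ := hmemL
  rw [hdecA, hdecC, hdecV] at hu
  have hker : K ≤ LinearMap.ker (Matrix.mulVecLin (switchedObs A C u L)) := by
    refine le_trans hKspan (Submodule.span_le.mpr ?_)
    rintro x ⟨i, rfl⟩
    exact (hrow u L (v i)).mp (fun k hk => hu i k hk)
  exact ⟨u, range_transpose_le_of_ker_le _ _ hker, hker⟩
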